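/- For every λ ∈ ℂ with λ ≠ 0 and λ ≠ 1, if the derivative of the j-invariant vanishes at λ, then j(λ) = 0 or j(λ) = 1 (i.e., all critical values of j on ℂ \ {0, 1} lie in {0, 1}, so j is a Belyi function). -/

import Mathlib

/-- The `j`-invariant `j(λ) = (4/27)·(λ² − λ + 1)³ / (λ²(λ − 1)²)`. -/
noncomputable def jInv : ℂ → ℂ :=
  fun z => (4 / 27) * (z ^ 2 - z + 1) ^ 3 / (z ^ 2 * (z - 1) ^ 2)

/-- All critical values of the `j`-invariant on `ℂ \ {0, 1}` lie in `{0, 1}`: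
if `λ ≠ 0`, `λ ≠ 1` and `j'(λ) = 0`, then `j(λ) = 0` or `j(λ) = 1`.  Thus `j` is a
Belyi function. -/
theorem jInv_belyi (z : ℂ) (h0 : z ≠ 0) (h1 : z ≠ 1) (hc : deriv jInv z = 0) :
    jInv z = 0 ∨ jInv z = 1 := by
  have h1' : z - 1 ≠ 0 := sub_ne_zero.mpr h1
  have hg : z ^ 2 * (z - 1) ^ 2 ≠ 0 :=
    mul_ne_zero (pow_ne_zero _ h0) (pow_ne_zero _ h1')
  have hq : HasDerivAt (fun z : ℂ => z ^ 2 - z + 1) (2 * z - 1) z := by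
    have := ((hasDerivAt_pow 2 z).sub (hasDerivAt_id z)).add_const 1
    simpa using this
  have hN : HasDerivAt (fun z : ℂ => (4 / 27 : ℂ) * (z ^ 2 - z + 1) ^ 3)
      ((4 / 27) * (3 * (z ^ 2 - z + 1) ^ 2 * (2 * z - 1))) z := by
    have := (hq.pow 3).const_mul (4 / 27 : ℂ)
    simpa [mul_comm, mul_assoc, mul_left_comm] using this
  have hs : HasDerivAt (fun z : ℂ => (z - 1) ^ 2) (2 * (z - 1)) z := by
    have := ((hasDerivAt_id z).sub_const 1).fun_pow 2
    simpa using this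
  have hG : HasDerivAt (fun z : ℂ => z ^ 2 * (z - 1) ^ 2)
      (2 * z * (z - 1) ^ 2 + z ^ 2 * (2 * (z - 1))) z := by
    have := (hasDerivAt_pow 2 z).fun_mul hs
    simpa [pow_one] using this
  have hd : HasDerivAt jInv
      (((4 / 27) * (3 * (z ^ 2 - z + 1) ^ 2 * (2 * z - 1)) * (z ^ 2 * (z - 1) ^ 2)
        - (4 / 27 : ℂ) * (z ^ 2 - z + 1) ^ 3 * (2 * z * (z - 1) ^ 2 + z ^ 2 * (2 * (z - 1))))
        / (z ^ 2 * (z - 1) ^ 2) ^ 2) z := hN.div hG hg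
  rw [hd.deriv] at hc
  have hnum : (4 / 27) * (3 * (z ^ 2 - z + 1) ^ 2 * (2 * z - 1)) * (z ^ 2 * (z - 1) ^ 2)
      - (4 / 27 : ℂ) * (z ^ 2 - z + 1) ^ 3 * (2 * z * (z - 1) ^ 2 + z ^ 2 * (2 * (z - 1))) = 0 :=
    (div_eq_zero_iff.mp hc).resolve_right (pow_ne_zero 2 hg)
  have key : (z ^ 2 - z + 1) ^ 2 * (z * ((z - 1) * ((2 * z - 1) * ((z - 2) * (z + 1))))) = 0 := by
    linear_combination (27 / 4 : ℂ) * hnum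
  rcases mul_eq_zero.mp key with hA | hB
  · left
    have hA' : z ^ 2 - z + 1 = 0 := pow_eq_zero_iff (by norm_num) |>.mp hA
    simp [jInv, hA']
  · right
    rcases mul_eq_zero.mp hB with h | hB
    · exact absurd h h0
    rcases mul_eq_zero.mp hB with h | hB
    · exact absurd h h1'
    rcases mul_eq_zero.mp hB with h | hB
    · have hz : z = 1 / 2 := by linear_combination (1 / 2 : ℂ) * h
      subst hz; simp [jInv]; norm_num
    rcases mul_eq_zero.mp hB with h | h
    · have hz : z = 2 := by linear_combination h
      subst hz; simp [jInv]; norm_num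
    · have hz : z = -1 := by linear_combination h
      subst hz; simp [jInv]; norm_num
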